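/- arXiv:2105.00151 — 3 statements merged into one kernel-verified Lean document; each statement's English description precedes it below -/
import Mathlib

section
/- Let A, B ⊆ ℝ² be nonempty compact sets such that B is connected and A ∪ B is connected. Then the Lebesgue measure of {(θ,ρ) ∈ [0,2π) × ℝ : G(θ,ρ) ∩ A ≠ ∅ ∧ G(θ,ρ) ∩ B = ∅} equals 2 · (P(A ∪ B) − P(B)). (The identity m(G ∩ conv(I_i, l(s,t)) ≠ ∅, G ∩ l(s,t) = ∅) = ℒ(conv(I_i, l(s,t))) − ℒ(l(s,t)) established in the proof of Theorem 3, with A the inner part and B the segment, stated for directed lines.) -/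
open MeasureTheory Real Set
open scoped InnerProductSpace

noncomputable def u (θ : ℝ) : EuclideanSpace ℝ (Fin 2) :=
  !₂[Real.cos θ, Real.sin θ]

/-- The (directed) line with normal direction `u θ` at signed distance `ρ`. -/
def G (θ ρ : ℝ) : Set (EuclideanSpace ℝ (Fin 2)) :=
  {x | ⟪x, u θ⟫_ℝ = ρ}

/-- The disaster area: the closed half-plane to the `u θ` side of the line `G θ ρ`. -/
def R (θ ρ : ℝ) : Set (EuclideanSpace ℝ (Fin 2)) :=
  {x | ⟪x, u θ⟫_ℝ ≥ ρ}

/-- Support integral: integral of the support function over all directions;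
equals the perimeter of the convex hull. -/
noncomputable def P (X : Set (EuclideanSpace ℝ (Fin 2))) : ℝ :=
  ∫ θ in (0:ℝ)..(2 * Real.pi), sSup {r : ℝ | ∃ x ∈ X, r = ⟪x, u θ⟫_ℝ}

def Sv (X : Set (EuclideanSpace ℝ (Fin 2))) (v : EuclideanSpace ℝ (Fin 2)) : Set ℝ :=
  (fun x => ⟪x, v⟫_ℝ) '' X

lemma Sv_eq (X : Set (EuclideanSpace ℝ (Fin 2))) (θ : ℝ) :
    {r : ℝ | ∃ x ∈ X, r = ⟪x, u θ⟫_ℝ} = Sv X (u θ) := by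
  ext r; simp [Sv, eq_comm]

lemma continuous_inner_right (v : EuclideanSpace ℝ (Fin 2)) :
    Continuous fun x : EuclideanSpace ℝ (Fin 2) => ⟪x, v⟫_ℝ :=
  continuous_id.inner continuous_const

lemma continuous_u : Continuous u := by
  have h : Continuous fun θ : ℝ =>
      (WithLp.equiv 2 (Fin 2 → ℝ)).symm ![Real.cos θ, Real.sin θ] := by
    apply (PiLp.continuous_toLp (p := 2) (β := fun _ : Fin 2 => ℝ)).comp
    apply continuous_pi
    intro i
    fin_cases i <;> simp [Real.continuous_cos, Real.continuous_sin]
  exact h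

lemma u_add_pi (θ : ℝ) : u (θ + π) = -u θ := by
  ext i
  have : (-u θ) i = -(u θ i) := rfl
  rw [this]
  fin_cases i <;> simp [u, Real.cos_add_pi, Real.sin_add_pi]

lemma u_add_two_pi (θ : ℝ) : u (θ + 2 * π) = u θ := by
  ext i
  fin_cases i <;> simp [u, Real.cos_add_two_pi, Real.sin_add_two_pi]

lemma Sv_compact {X : Set (EuclideanSpace ℝ (Fin 2))} (hX : IsCompact X) (v) :
    IsCompact (Sv X v) := hX.image (continuous_inner_right v)

lemma Sv_nonempty {X : Set (EuclideanSpace ℝ (Fin 2))} (hX : X.Nonempty) (v) :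
    (Sv X v).Nonempty := hX.image _

noncomputable def fsup (X : Set (EuclideanSpace ℝ (Fin 2))) (θ : ℝ) : ℝ := sSup (Sv X (u θ))
noncomputable def finf (X : Set (EuclideanSpace ℝ (Fin 2))) (θ : ℝ) : ℝ := sInf (Sv X (u θ))

lemma Sv_eq_Icc {X : Set (EuclideanSpace ℝ (Fin 2))} (hXc : IsCompact X)
    (hconn : IsConnected X) (θ : ℝ) : Sv X (u θ) = Icc (finf X θ) (fsup X θ) :=
  eq_Icc_of_connected_compact (hconn.image _ (continuous_inner_right (u θ)).continuousOn)
    (Sv_compact hXc (u θ))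

lemma Sv_neg (X : Set (EuclideanSpace ℝ (Fin 2))) (v) : Sv X (-v) = -(Sv X v) := by
  ext r
  simp only [Sv, Set.mem_image, Set.mem_neg, inner_neg_right]
  constructor
  · rintro ⟨x, hx, h⟩; exact ⟨x, hx, by linarith⟩
  · rintro ⟨x, hx, h⟩; exact ⟨x, hx, by linarith⟩

lemma finf_eq (X : Set (EuclideanSpace ℝ (Fin 2))) (θ : ℝ) :
    finf X θ = -(fsup X (θ + π)) := by
  rw [fsup, u_add_pi, Sv_neg, finf]
  rw [Real.sInf_def]

lemma fsup_periodic (X : Set (EuclideanSpace ℝ (Fin 2))) :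
    Function.Periodic (fsup X) (2 * π) := fun θ => by rw [fsup, fsup, u_add_two_pi]

lemma fsup_le {X : Set (EuclideanSpace ℝ (Fin 2))} (hXc : IsCompact X) (hne : X.Nonempty)
    {C : ℝ} (hC : ∀ x ∈ X, ‖x‖ ≤ C) (v w : EuclideanSpace ℝ (Fin 2)) :
    sSup (Sv X v) ≤ sSup (Sv X w) + C * ‖v - w‖ := by
  apply csSup_le (Sv_nonempty hne v)
  rintro r ⟨x, hx, rfl⟩
  have h1 : ⟪x, v⟫_ℝ = ⟪x, w⟫_ℝ + ⟪x, v - w⟫_ℝ := by rw [inner_sub_right]; ring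
  have h2 : ⟪x, v - w⟫_ℝ ≤ ‖x‖ * ‖v - w‖ := real_inner_le_norm x (v - w)
  have h3 : ‖x‖ * ‖v - w‖ ≤ C * ‖v - w‖ :=
    mul_le_mul_of_nonneg_right (hC x hx) (norm_nonneg _)
  have h4 : ⟪x, w⟫_ℝ ≤ sSup (Sv X w) := le_csSup (Sv_compact hXc w).bddAbove ⟨x, hx, rfl⟩
  simp only []
  linarith

lemma continuous_fsup {X : Set (EuclideanSpace ℝ (Fin 2))} (hXc : IsCompact X)
    (hne : X.Nonempty) : Continuous (fsup X) := by
  obtain ⟨C, hC⟩ := hXc.isBounded.exists_norm_le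
  have hC0 : 0 ≤ C := le_trans (norm_nonneg _) (hC _ hne.choose_spec)
  have lip : LipschitzWith (Real.toNNReal C)
      (fun v : EuclideanSpace ℝ (Fin 2) => sSup (Sv X v)) := by
    apply LipschitzWith.of_dist_le_mul
    intro v w
    rw [Real.dist_eq, abs_sub_le_iff, Real.coe_toNNReal C hC0, dist_eq_norm]
    constructor
    · linarith [fsup_le hXc hne hC v w]
    · rw [show ‖v - w‖ = ‖w - v‖ from norm_sub_rev v w]
      linarith [fsup_le hXc hne hC w v]
  exact lip.continuous.comp continuous_u

lemma continuous_finf {X : Set (EuclideanSpace ℝ (Fin 2))} (hXc : IsCompact X)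
    (hne : X.Nonempty) : Continuous (finf X) := by
  have h : finf X = fun θ => -(fsup X (θ + π)) := funext (finf_eq X)
  rw [h]
  exact ((continuous_fsup hXc hne).comp (continuous_id.add continuous_const)).neg

lemma Icc_diff_Icc_eq {a b c d : ℝ} (hac : a ≤ c) (hcd : c ≤ d) (hdb : d ≤ b) :
    Icc a b \ Icc c d = Ico a c ∪ Ioc d b := by
  ext x
  simp only [mem_diff, mem_Icc, mem_union, mem_Ico, mem_Ioc, not_and, not_le]
  constructor
  · rintro ⟨⟨ha, hb⟩, h⟩
    by_cases hc : x < c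
    · exact Or.inl ⟨ha, hc⟩
    · push_neg at hc; exact Or.inr ⟨h hc, hb⟩
  · rintro (⟨ha, hc⟩ | ⟨hd, hb⟩)
    · exact ⟨⟨ha, by linarith⟩, fun h => by linarith⟩
    · exact ⟨⟨by linarith, hb⟩, fun h => hd⟩

lemma volume_Icc_diff_Icc {a b c d : ℝ} (hac : a ≤ c) (hcd : c ≤ d) (hdb : d ≤ b) :
    volume (Icc a b \ Icc c d) = ENNReal.ofReal ((c - a) + (b - d)) := by
  rw [Icc_diff_Icc_eq hac hcd hdb, measure_union ?_ measurableSet_Ioc,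
    Real.volume_Ico, Real.volume_Ioc, ← ENNReal.ofReal_add (by linarith) (by linarith)]
  · rw [Set.disjoint_left]
    rintro x hx hx'
    simp only [mem_Ico, mem_Ioc] at hx hx'
    linarith [hx.2, hx'.1]

lemma G_inter_nonempty (X : Set (EuclideanSpace ℝ (Fin 2))) (θ ρ : ℝ) :
    (G θ ρ ∩ X).Nonempty ↔ ρ ∈ Sv X (u θ) := by
  constructor
  · rintro ⟨x, hxG, hxX⟩; exact ⟨x, hxX, hxG⟩
  · rintro ⟨x, hxX, hx⟩; exact ⟨x, hx, hxX⟩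

lemma P_eq (X : Set (EuclideanSpace ℝ (Fin 2))) :
    P X = ∫ θ in (0:ℝ)..(2 * π), fsup X θ := by
  unfold P fsup
  simp only [Sv_eq]


/-- The identity `m(G ∩ conv(A ∪ B) ≠ ∅, G ∩ B = ∅) = ℒ(conv(A ∪ B)) − ℒ(conv B)`
from the proof of Theorem 3, stated for directed lines. -/
theorem stmt_7 (A B : Set (EuclideanSpace ℝ (Fin 2)))
    (hAc : IsCompact A) (hAne : A.Nonempty)
    (hBc : IsCompact B) (hBne : B.Nonempty)
    (hBconn : IsConnected B) (hABconn : IsConnected (A ∪ B)) :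
    volume {p : ℝ × ℝ | p ∈ Set.Ico 0 (2 * Real.pi) ×ˢ (Set.univ : Set ℝ) ∧
        (G p.1 p.2 ∩ A).Nonempty ∧ G p.1 p.2 ∩ B = ∅}
      = ENNReal.ofReal (2 * (P (A ∪ B) - P B)) := by
  have hABc : IsCompact (A ∪ B) := hAc.union hBc
  have hABne : (A ∪ B).Nonempty := hAne.mono subset_union_left
  have h1 : ∀ θ, finf (A ∪ B) θ ≤ finf B θ := fun θ =>
    csInf_le_csInf (Sv_compact hABc _).bddBelow (Sv_nonempty hBne _)
      (image_mono subset_union_right)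
  have h2 : ∀ θ, fsup B θ ≤ fsup (A ∪ B) θ := fun θ =>
    csSup_le_csSup (Sv_compact hABc _).bddAbove (Sv_nonempty hBne _)
      (image_mono subset_union_right)
  have h3 : ∀ θ, finf B θ ≤ fsup B θ := fun θ =>
    csInf_le_csSup (Sv_nonempty hBne _) (Sv_compact hBc _).bddBelow
      (Sv_compact hBc _).bddAbove
  have hcf₁ : Continuous (fsup (A ∪ B)) := continuous_fsup hABc hABne
  have hcf₂ : Continuous (fsup B) := continuous_fsup hBc hBne
  have hcg₁ : Continuous (finf (A ∪ B)) := continuous_finf hABc hABne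
  have hcg₂ : Continuous (finf B) := continuous_finf hBc hBne
  -- rewrite the set
  have key : ∀ θ ρ, ((G θ ρ ∩ A).Nonempty ∧ G θ ρ ∩ B = ∅) ↔
      ρ ∈ Icc (finf (A ∪ B) θ) (fsup (A ∪ B) θ) \ Icc (finf B θ) (fsup B θ) := by
    intro θ ρ
    rw [G_inter_nonempty, ← Set.not_nonempty_iff_eq_empty, G_inter_nonempty,
      ← Sv_eq_Icc hABc hABconn θ, ← Sv_eq_Icc hBc hBconn θ, mem_diff]
    have himg : Sv (A ∪ B) (u θ) = Sv A (u θ) ∪ Sv B (u θ) := image_union _ _ _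
    rw [himg, mem_union]
    tauto
  have hset : {p : ℝ × ℝ | p ∈ Set.Ico 0 (2 * Real.pi) ×ˢ (Set.univ : Set ℝ) ∧
        (G p.1 p.2 ∩ A).Nonempty ∧ G p.1 p.2 ∩ B = ∅}
      = {p : ℝ × ℝ | p.1 ∈ Ico 0 (2 * π) ∧
          p.2 ∈ Icc (finf (A ∪ B) p.1) (fsup (A ∪ B) p.1) \ Icc (finf B p.1) (fsup B p.1)} := by
    ext ⟨θ, ρ⟩
    simp only [mem_setOf_eq, Set.mem_prod, Set.mem_univ, and_true, key]
  set M := {p : ℝ × ℝ | p.1 ∈ Ico 0 (2 * π) ∧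
      p.2 ∈ Icc (finf (A ∪ B) p.1) (fsup (A ∪ B) p.1) \ Icc (finf B p.1) (fsup B p.1)}
    with hM
  rw [hset]
  have hMeas : MeasurableSet M := by
    have e : M = (Prod.fst ⁻¹' Ico 0 (2 * π)) ∩
        (({p : ℝ × ℝ | finf (A ∪ B) p.1 ≤ p.2} ∩ {p : ℝ × ℝ | p.2 ≤ fsup (A ∪ B) p.1}) ∩
          ({p : ℝ × ℝ | finf B p.1 ≤ p.2} ∩ {p : ℝ × ℝ | p.2 ≤ fsup B p.1})ᶜ) := by
      ext ⟨θ, ρ⟩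
      simp only [hM, mem_setOf_eq, mem_diff, mem_Icc, mem_inter_iff, mem_preimage,
        mem_compl_iff, not_and]
    rw [e]
    exact (measurable_fst measurableSet_Ico).inter
      (((measurableSet_le (hcg₁.measurable.comp measurable_fst) measurable_snd).inter
        (measurableSet_le measurable_snd (hcf₁.measurable.comp measurable_fst))).inter
        ((measurableSet_le (hcg₂.measurable.comp measurable_fst) measurable_snd).inter
          (measurableSet_le measurable_snd (hcf₂.measurable.comp measurable_fst))).compl)
  rw [Measure.volume_eq_prod, Measure.prod_apply hMeas]
  have hfib : (fun θ => volume (Prod.mk θ ⁻¹' M)) = (Ico 0 (2 * π)).indicator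
      (fun θ => ENNReal.ofReal ((finf B θ - finf (A ∪ B) θ) +
        (fsup (A ∪ B) θ - fsup B θ))) := by
    funext θ
    by_cases hθ : θ ∈ Ico 0 (2 * π)
    · rw [indicator_of_mem hθ]
      have hpre : Prod.mk θ ⁻¹' M =
          Icc (finf (A ∪ B) θ) (fsup (A ∪ B) θ) \ Icc (finf B θ) (fsup B θ) := by
        ext ρ
        constructor
        · rintro ⟨_, h⟩; exact h
        · intro h; exact ⟨hθ, h⟩
      rw [hpre, volume_Icc_diff_Icc (h1 θ) (h3 θ) (h2 θ)]
    · rw [indicator_of_notMem hθ]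
      have hpre : Prod.mk θ ⁻¹' M = ∅ := by
        ext ρ
        simp only [mem_empty_iff_false, iff_false, mem_preimage]
        rintro ⟨h, _⟩
        exact hθ h
      rw [hpre, measure_empty]
  rw [hfib, lintegral_indicator measurableSet_Ico]
  have h2pi : (0:ℝ) ≤ 2 * π := by linarith [Real.pi_pos]
  have hcont : Continuous fun θ => (finf B θ - finf (A ∪ B) θ) +
      (fsup (A ∪ B) θ - fsup B θ) := (hcg₂.sub hcg₁).add (hcf₁.sub hcf₂)
  have hInt : IntegrableOn (fun θ => (finf B θ - finf (A ∪ B) θ) +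
      (fsup (A ∪ B) θ - fsup B θ)) (Ico 0 (2 * π)) volume :=
    (hcont.integrableOn_Icc).mono_set Ico_subset_Icc_self
  rw [← ofReal_integral_eq_lintegral_ofReal hInt (Filter.Eventually.of_forall fun θ =>
    add_nonneg (sub_nonneg.2 (h1 θ)) (sub_nonneg.2 (h2 θ)))]
  congr 1
  rw [setIntegral_congr_set Ico_ae_eq_Ioc, ← intervalIntegral.integral_of_le h2pi]
  have hi₁ : IntervalIntegrable (fsup (A ∪ B)) volume 0 (2 * π) :=
    hcf₁.intervalIntegrable _ _
  have hi₂ : IntervalIntegrable (fsup B) volume 0 (2 * π) :=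
    hcf₂.intervalIntegrable _ _
  have hig : IntervalIntegrable (fun θ => finf B θ - finf (A ∪ B) θ) volume 0 (2 * π) :=
    (hcg₂.sub hcg₁).intervalIntegrable _ _
  have hif : IntervalIntegrable (fun θ => fsup (A ∪ B) θ - fsup B θ) volume 0 (2 * π) :=
    (hcf₁.sub hcf₂).intervalIntegrable _ _
  rw [intervalIntegral.integral_add hig hif]
  have hper : Function.Periodic (fun t => fsup (A ∪ B) t - fsup B t) (2 * π) := fun t => by
    simp only
    rw [fsup_periodic (A ∪ B) t, fsup_periodic B t]
  have e2 : (∫ θ in (0:ℝ)..(2 * π), (finf B θ - finf (A ∪ B) θ)) =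
      ∫ θ in (0:ℝ)..(2 * π), (fsup (A ∪ B) θ - fsup B θ) := by
    calc (∫ θ in (0:ℝ)..(2 * π), (finf B θ - finf (A ∪ B) θ))
        = ∫ θ in (0:ℝ)..(2 * π), (fun t => fsup (A ∪ B) t - fsup B t) (θ + π) := by
          apply intervalIntegral.integral_congr
          intro θ _
          simp only
          rw [finf_eq, finf_eq]
          ring
      _ = ∫ θ in (0:ℝ) + π..(2 * π) + π, (fun t => fsup (A ∪ B) t - fsup B t) θ :=
          intervalIntegral.integral_comp_add_right (fun t => fsup (A ∪ B) t - fsup B t) π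
      _ = ∫ θ in π..π + 2 * π, (fun t => fsup (A ∪ B) t - fsup B t) θ := by
          rw [zero_add, add_comm (2 * π) π]
      _ = ∫ θ in (0:ℝ)..0 + 2 * π, (fun t => fsup (A ∪ B) t - fsup B t) θ :=
          hper.intervalIntegral_add_eq π 0
      _ = _ := by rw [zero_add]
  rw [e2, P_eq, P_eq, intervalIntegral.integral_sub hi₁ hi₂]
  ring
end

section
/- Let s, t ∈ ℝ² with s ≠ t, and let n ∈ ℝ², n ≠ 0, satisfy ⟪t − s, n⟫ = 0 (n is normal to the line through s and t). Let A, B ⊆ ℝ² be nonempty compact sets with s, t ∈ A and s, t ∈ B, such that ⟪x − s, n⟫ ≥ 0 for all x ∈ A, ⟪x − s, n⟫ ≤ 0 for all x ∈ B (A and B lie in opposite closed half-planes of the line through s and t), and 0 ≤ ⟪x − s, t − s⟫ ≤ ‖t − s‖² for all x ∈ A ∪ B (both sets lie in the slab between the perpendiculars to l(s,t) at s and at t). Then P(A) + P(B) = P(A ∪ B) + 2 · dist s t. (The perimeter identity Σᵢ ℒ(conv(I_i, l(s,t))) = ℒ(conv N₀) + ℒ(l(s,t)) underlying Corollary 2 of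 the paper, which reduces a multiple-route network to an equivalent single-route network N₀.) -/
open MeasureTheory Real Set
open scoped InnerProductSpace
open intervalIntegral

namespace Stmt8Aux

noncomputable def hsup (X : Set (EuclideanSpace ℝ (Fin 2))) (θ : ℝ) : ℝ :=
  sSup {r : ℝ | ∃ x ∈ X, r = ⟪x, u θ⟫_ℝ}

lemma inner_apply' (x y : EuclideanSpace ℝ (Fin 2)) : ⟪x, y⟫_ℝ = x 0 * y 0 + x 1 * y 1 := by
  simp [PiLp.inner_apply, Fin.sum_univ_two, RCLike.inner_apply, mul_comm]

lemma inner_u (x : EuclideanSpace ℝ (Fin 2)) (θ : ℝ) :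
    ⟪x, u θ⟫_ℝ = x 0 * Real.cos θ + x 1 * Real.sin θ := by
  rw [inner_apply']; simp [u]

lemma max_eq_half (a b : ℝ) : max a b = (a + b)/2 + |b - a|/2 := by
  rcases le_total a b with h | h
  · rw [max_eq_right h, abs_of_nonneg (by linarith)]; ring
  · rw [max_eq_left h, abs_of_nonpos (by linarith)]; ring

lemma key_real (v0 v1 w0 w1 d0 d1 : ℝ) (hv : 0 < v0^2 + v1^2)
    (h1 : 0 ≤ d0*v0 + d1*v1) (h2 : d0*v0 + d1*v1 ≤ v0^2 + v1^2)
    (h3 : (d1*v0 - d0*v1) * (w1*v0 - w0*v1) ≤ 0) :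
    d0*w0 + d1*w1 ≤ max 0 (v0*w0 + v1*w1) := by
  have key : (d0*w0 + d1*w1) * (v0^2+v1^2)
      = (d0*v0 + d1*v1) * (v0*w0 + v1*w1) + (d1*v0 - d0*v1)*(w1*v0 - w0*v1) := by ring
  rcases le_total (v0*w0 + v1*w1) 0 with h | h
  · have h4 : (d0*v0 + d1*v1) * (v0*w0 + v1*w1) ≤ 0 := mul_nonpos_of_nonneg_of_nonpos h1 h
    have : d0*w0 + d1*w1 ≤ 0 := by nlinarith
    exact this.trans (le_max_left _ _)
  · have h4 : (d0*v0 + d1*v1 - (v0^2+v1^2)) * (v0*w0 + v1*w1) ≤ 0 :=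
      mul_nonpos_of_nonpos_of_nonneg (by linarith) h
    have : d0*w0 + d1*w1 ≤ v0*w0 + v1*w1 := by nlinarith
    exact this.trans (le_max_right _ _)

lemma pt_bound (s0 s1 t0 t1 x0 x1 w0 w1 : ℝ) (hv : 0 < (t0-s0)^2 + (t1-s1)^2)
    (h1 : 0 ≤ (x0-s0)*(t0-s0) + (x1-s1)*(t1-s1))
    (h2 : (x0-s0)*(t0-s0) + (x1-s1)*(t1-s1) ≤ (t0-s0)^2 + (t1-s1)^2)
    (h3 : ((x1-s1)*(t0-s0) - (x0-s0)*(t1-s1)) * (w1*(t0-s0) - w0*(t1-s1)) ≤ 0) :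
    x0*w0 + x1*w1 ≤ max (s0*w0 + s1*w1) (t0*w0 + t1*w1) := by
  have key := key_real (t0-s0) (t1-s1) w0 w1 (x0-s0) (x1-s1) hv h1 h2 h3
  rcases le_total ((t0-s0)*w0 + (t1-s1)*w1) 0 with h | h
  · rw [max_eq_left h] at key
    have : x0*w0 + x1*w1 ≤ s0*w0 + s1*w1 := by nlinarith
    exact this.trans (le_max_left _ _)
  · rw [max_eq_right h] at key
    have : x0*w0 + x1*w1 ≤ t0*w0 + t1*w1 := by nlinarith
    exact this.trans (le_max_right _ _)

lemma cos_lip (a b : ℝ) : |Real.cos a - Real.cos b| ≤ |a - b| := by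
  rw [Real.cos_sub_cos, abs_mul, abs_mul]
  have h1 : |Real.sin ((a+b)/2)| ≤ 1 := Real.abs_sin_le_one _
  have h2 : |Real.sin ((a-b)/2)| ≤ |(a-b)/2| := Real.abs_sin_le_abs
  have he : |(a-b)/2| = |a-b|/2 := by rw [abs_div]; norm_num
  rw [he] at h2
  have := abs_nonneg (Real.sin ((a+b)/2))
  have := abs_nonneg (Real.sin ((a-b)/2))
  calc |(-2:ℝ)| * |Real.sin ((a+b)/2)| * |Real.sin ((a-b)/2)|
      ≤ 2 * 1 * (|a-b|/2) := by
        rw [abs_neg, abs_two]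
        apply mul_le_mul (by nlinarith) h2 (by positivity) (by positivity)
    _ = |a-b| := by ring

lemma sin_lip (a b : ℝ) : |Real.sin a - Real.sin b| ≤ |a - b| := by
  rw [Real.sin_sub_sin, abs_mul, abs_mul]
  have h1 : |Real.cos ((a+b)/2)| ≤ 1 := Real.abs_cos_le_one _
  have h2 : |Real.sin ((a-b)/2)| ≤ |(a-b)/2| := Real.abs_sin_le_abs
  have he : |(a-b)/2| = |a-b|/2 := by rw [abs_div]; norm_num
  rw [he] at h2
  have := abs_nonneg (Real.cos ((a+b)/2))
  have := abs_nonneg (Real.sin ((a-b)/2))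
  calc |(2:ℝ)| * |Real.sin ((a-b)/2)| * |Real.cos ((a+b)/2)|
      ≤ 2 * (|a-b|/2) * 1 := by
        rw [abs_two]
        apply mul_le_mul (by nlinarith) h1 (by positivity) (by positivity)
    _ = |a-b| := by ring

lemma abs_coord (x : EuclideanSpace ℝ (Fin 2)) : |x 0| ≤ ‖x‖ ∧ |x 1| ≤ ‖x‖ := by
  have h : ‖x‖ = Real.sqrt (x 0 ^ 2 + x 1 ^ 2) := by
    rw [EuclideanSpace.norm_eq, Fin.sum_univ_two]
    simp [Real.norm_eq_abs, sq_abs]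
  constructor
  · rw [h, ← Real.sqrt_sq_eq_abs]
    exact Real.sqrt_le_sqrt (by nlinarith [sq_nonneg (x 1)])
  · rw [h, ← Real.sqrt_sq_eq_abs]
    exact Real.sqrt_le_sqrt (by nlinarith [sq_nonneg (x 0)])

section Sup
variable {X : Set (EuclideanSpace ℝ (Fin 2))}

lemma S_eq (X : Set (EuclideanSpace ℝ (Fin 2))) (θ : ℝ) :
    {r : ℝ | ∃ x ∈ X, r = ⟪x, u θ⟫_ℝ} = (fun x : EuclideanSpace ℝ (Fin 2) => ⟪x, u θ⟫_ℝ) '' X := by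
  ext r
  constructor
  · rintro ⟨x, hx, rfl⟩; exact ⟨x, hx, rfl⟩
  · rintro ⟨x, hx, rfl⟩; exact ⟨x, hx, rfl⟩

lemma S_bdd (hX : IsCompact X) (θ : ℝ) : BddAbove {r : ℝ | ∃ x ∈ X, r = ⟪x, u θ⟫_ℝ} := by
  rw [S_eq]
  exact (hX.image (continuous_id.inner continuous_const)).bddAbove

lemma S_ne (hne : X.Nonempty) (θ : ℝ) : {r : ℝ | ∃ x ∈ X, r = ⟪x, u θ⟫_ℝ}.Nonempty :=
  ⟨_, hne.choose, hne.choose_spec, rfl⟩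

lemma h_cont (hX : IsCompact X) (hne : X.Nonempty) :
    Continuous (fun θ => sSup {r : ℝ | ∃ x ∈ X, r = ⟪x, u θ⟫_ℝ}) := by
  obtain ⟨M, hM⟩ := hX.isBounded.exists_norm_le
  have hM0 : 0 ≤ M := le_trans (norm_nonneg _) (hM _ hne.choose_spec)
  have hb : ∀ θ1 θ2 : ℝ, sSup {r : ℝ | ∃ x ∈ X, r = ⟪x, u θ1⟫_ℝ}
      ≤ sSup {r : ℝ | ∃ x ∈ X, r = ⟪x, u θ2⟫_ℝ} + 2*M*|θ1 - θ2| := by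
    intro θ1 θ2
    apply csSup_le (S_ne hne θ1)
    rintro r ⟨x, hx, rfl⟩
    have hle : ⟪x, u θ2⟫_ℝ ≤ sSup {r : ℝ | ∃ x ∈ X, r = ⟪x, u θ2⟫_ℝ} :=
      le_csSup (S_bdd hX θ2) ⟨x, hx, rfl⟩
    have hdiff : ⟪x, u θ1⟫_ℝ - ⟪x, u θ2⟫_ℝ ≤ 2*M*|θ1 - θ2| := by
      rw [inner_u, inner_u]
      have e : x 0 * Real.cos θ1 + x 1 * Real.sin θ1 - (x 0 * Real.cos θ2 + x 1 * Real.sin θ2)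
          = x 0 * (Real.cos θ1 - Real.cos θ2) + x 1 * (Real.sin θ1 - Real.sin θ2) := by ring
      rw [e]
      have h0 := (abs_coord x).1
      have h1 := (abs_coord x).2
      have hx0 : x 0 * (Real.cos θ1 - Real.cos θ2) ≤ M * |θ1 - θ2| := by
        calc x 0 * (Real.cos θ1 - Real.cos θ2) ≤ |x 0 * (Real.cos θ1 - Real.cos θ2)| := le_abs_self _
          _ = |x 0| * |Real.cos θ1 - Real.cos θ2| := abs_mul _ _
          _ ≤ M * |θ1 - θ2| := mul_le_mul (h0.trans (hM x hx)) (cos_lip _ _) (abs_nonneg _) hM0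
      have hx1 : x 1 * (Real.sin θ1 - Real.sin θ2) ≤ M * |θ1 - θ2| := by
        calc x 1 * (Real.sin θ1 - Real.sin θ2) ≤ |x 1 * (Real.sin θ1 - Real.sin θ2)| := le_abs_self _
          _ = |x 1| * |Real.sin θ1 - Real.sin θ2| := abs_mul _ _
          _ ≤ M * |θ1 - θ2| := mul_le_mul (h1.trans (hM x hx)) (sin_lip _ _) (abs_nonneg _) hM0
      linarith
    linarith
  have : LipschitzWith (Real.toNNReal (2*M)) (fun θ => sSup {r : ℝ | ∃ x ∈ X, r = ⟪x, u θ⟫_ℝ}) := by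
    apply LipschitzWith.of_dist_le_mul
    intro θ1 θ2
    rw [Real.dist_eq, Real.dist_eq, Real.coe_toNNReal _ (by positivity), abs_sub_le_iff]
    constructor
    · linarith [hb θ1 θ2]
    · have := hb θ2 θ1
      rw [abs_sub_comm] at this
      linarith
  exact this.continuous

end Sup

lemma integral_abs_cos : ∫ θ in (0:ℝ)..(2*π), |Real.cos θ| = 4 := by
  have hc : ∀ a b : ℝ, IntervalIntegrable (fun θ => |Real.cos θ|) volume a b :=
    fun a b => (continuous_cos.abs).intervalIntegrable a b
  have i1 : ∫ θ in (0:ℝ)..(π/2), |Real.cos θ| = 1 := by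
    rw [integral_congr (g := Real.cos) ?_, integral_cos]
    · simp
    · intro θ hθ
      rw [uIcc_of_le (by positivity)] at hθ
      exact abs_of_nonneg (Real.cos_nonneg_of_mem_Icc ⟨by nlinarith [hθ.1, Real.pi_pos], hθ.2⟩)
  have i2 : ∫ θ in (π/2:ℝ)..(π + π/2), |Real.cos θ| = 2 := by
    rw [integral_congr (g := fun θ => -Real.cos θ) ?_,
      intervalIntegral.integral_neg, integral_cos]
    · rw [Real.sin_pi_div_two]
      have : Real.sin (π + π/2) = -1 := by rw [Real.sin_add]; simp
      rw [this]; ring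
    · intro θ hθ
      rw [uIcc_of_le (by linarith [Real.pi_pos])] at hθ
      exact abs_of_nonpos (Real.cos_nonpos_of_pi_div_two_le_of_le hθ.1 (by linarith [hθ.2]))
  have i3 : ∫ θ in (π + π/2:ℝ)..(2*π), |Real.cos θ| = 1 := by
    rw [integral_congr (g := Real.cos) ?_, integral_cos]
    · have h1 : Real.sin (π + π/2) = -1 := by rw [Real.sin_add]; simp
      rw [Real.sin_two_pi, h1]; ring
    · intro θ hθ
      rw [uIcc_of_le (by linarith [Real.pi_pos])] at hθ
      have := Real.cos_nonneg_of_mem_Icc (x := θ - 2*π)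
        ⟨by linarith [hθ.1], by linarith [hθ.2, Real.pi_pos]⟩
      rw [Real.cos_sub, Real.cos_two_pi, Real.sin_two_pi] at this
      simp only []
      refine abs_of_nonneg ?_
      have he : Real.cos θ * 1 + Real.sin θ * 0 = Real.cos θ := by ring
      linarith [he ▸ ‹0 ≤ Real.cos θ * 1 + Real.sin θ * 0›]
  have hA := integral_add_adjacent_intervals
    (a := (0:ℝ)) (b := π/2) (c := π + π/2) (hc _ _) (hc _ _)
  have hB := integral_add_adjacent_intervals
    (a := (0:ℝ)) (b := π + π/2) (c := 2*π) (hc _ _) (hc _ _)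
  rw [← hB, ← hA, i1, i2, i3]; norm_num

lemma integral_abs_cos_shift (φ : ℝ) : ∫ θ in (0:ℝ)..(2*π), |Real.cos (θ - φ)| = 4 := by
  rw [intervalIntegral.integral_comp_sub_right (fun x => |Real.cos x|) φ]
  have hper : Function.Periodic (fun x => |Real.cos x|) (2*π) := fun x => by
    simp [Real.cos_add_two_pi]
  have h := hper.intervalIntegral_add_eq (0 - φ) 0
  rw [show (0:ℝ) - φ + 2*π = 2*π - φ by ring] at h
  rw [h, zero_add]
  exact integral_abs_cos

lemma integral_max_aux (a0 a1 b0 b1 : ℝ) (hv : 0 < (b0-a0)^2 + (b1-a1)^2) :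
    ∫ θ in (0:ℝ)..(2*π), max (a0 * Real.cos θ + a1 * Real.sin θ) (b0 * Real.cos θ + b1 * Real.sin θ)
      = 2 * Real.sqrt ((b0-a0)^2 + (b1-a1)^2) := by
  set v0 := b0 - a0 with hv0
  set v1 := b1 - a1 with hv1
  set r := Real.sqrt (v0^2 + v1^2) with hr
  have hrpos : 0 < r := Real.sqrt_pos.2 hv
  set z : ℂ := ⟨v0, v1⟩ with hz
  have hzne : z ≠ 0 := by
    intro h
    rw [Complex.ext_iff] at h
    simp only [Complex.zero_re, Complex.zero_im] at h
    nlinarith [h.1, h.2]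
  have habs : ‖z‖ = r := by
    rw [Complex.norm_def, Complex.normSq_mk]; rw [hr]; ring_nf
  set φ := Complex.arg z with hφ
  have hcos : r * Real.cos φ = v0 := by
    rw [hφ, Complex.cos_arg hzne, habs]
    field_simp
    rfl
  have hsin : r * Real.sin φ = v1 := by
    rw [hφ, Complex.sin_arg, habs]
    field_simp
    rfl
  have hpt : ∀ θ ∈ uIcc (0:ℝ) (2*π),
      max (a0 * Real.cos θ + a1 * Real.sin θ) (b0 * Real.cos θ + b1 * Real.sin θ)
        = ((a0+b0)/2 * Real.cos θ + (a1+b1)/2 * Real.sin θ) + r/2 * |Real.cos (θ - φ)| := by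
    intro θ _
    rw [max_eq_half]
    have hdiff : b0 * Real.cos θ + b1 * Real.sin θ - (a0 * Real.cos θ + a1 * Real.sin θ)
        = r * Real.cos (θ - φ) := by
      rw [Real.cos_sub]
      have e : r * (Real.cos θ * Real.cos φ + Real.sin θ * Real.sin φ)
          = (r * Real.cos φ) * Real.cos θ + (r * Real.sin φ) * Real.sin θ := by ring
      rw [e, hcos, hsin, hv0, hv1]; ring
    rw [hdiff, abs_mul, abs_of_pos hrpos]; ring
  rw [integral_congr hpt]
  have hi1 : IntervalIntegrable (fun θ => (a0+b0)/2 * Real.cos θ + (a1+b1)/2 * Real.sin θ)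
      volume 0 (2*π) := by
    apply Continuous.intervalIntegrable; fun_prop
  have hi2 : IntervalIntegrable (fun θ => r/2 * |Real.cos (θ - φ)|) volume 0 (2*π) := by
    apply Continuous.intervalIntegrable
    exact continuous_const.mul (continuous_cos.comp (continuous_id.sub continuous_const)).abs
  rw [intervalIntegral.integral_add hi1 hi2]
  have h1 : ∫ θ in (0:ℝ)..(2*π), ((a0+b0)/2 * Real.cos θ + (a1+b1)/2 * Real.sin θ) = 0 := by
    rw [intervalIntegral.integral_add (by apply Continuous.intervalIntegrable; fun_prop)
      (by apply Continuous.intervalIntegrable; fun_prop),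
      intervalIntegral.integral_const_mul, intervalIntegral.integral_const_mul,
      integral_cos, integral_sin]
    simp [Real.sin_two_pi, Real.cos_two_pi]
  have h2 : ∫ θ in (0:ℝ)..(2*π), r/2 * |Real.cos (θ - φ)| = 2 * r := by
    rw [intervalIntegral.integral_const_mul, integral_abs_cos_shift]; ring
  rw [h1, h2, hr]; ring


lemma hsup_union {A B : Set (EuclideanSpace ℝ (Fin 2))}
    (hAc : IsCompact A) (hAne : A.Nonempty) (hBc : IsCompact B) (hBne : B.Nonempty) (θ : ℝ) :
    hsup (A ∪ B) θ = max (hsup A θ) (hsup B θ) := by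
  unfold hsup
  rw [S_eq, S_eq, S_eq, image_union,
    csSup_union ((hAc.image (continuous_id.inner continuous_const)).bddAbove)
      (hAne.image _) ((hBc.image (continuous_id.inner continuous_const)).bddAbove)
      (hBne.image _)]

lemma le_hsup {X : Set (EuclideanSpace ℝ (Fin 2))} (hX : IsCompact X)
    {x : EuclideanSpace ℝ (Fin 2)} (hx : x ∈ X) (θ : ℝ) : ⟪x, u θ⟫_ℝ ≤ hsup X θ :=
  le_csSup (S_bdd hX θ) ⟨x, hx, rfl⟩

lemma hsup_le {X : Set (EuclideanSpace ℝ (Fin 2))} (hne : X.Nonempty) {θ : ℝ} {a : ℝ}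
    (h : ∀ x ∈ X, ⟪x, u θ⟫_ℝ ≤ a) : hsup X θ ≤ a := by
  apply csSup_le (S_ne hne θ)
  rintro r ⟨x, hx, rfl⟩
  exact h x hx

lemma hsup_cont {X : Set (EuclideanSpace ℝ (Fin 2))} (hX : IsCompact X) (hne : X.Nonempty) :
    Continuous (hsup X) := h_cont hX hne

end Stmt8Aux

open Stmt8Aux in
/-- The perimeter identity `Σᵢ ℒ(conv(I_i, l(s,t))) = ℒ(conv N₀) + ℒ(l(s,t))`
underlying Corollary 2 of the paper: if `A` and `B` both contain `s` and `t`, lie in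
opposite closed half-planes of the line through `s` and `t`, and lie in the slab between
the perpendiculars to `l(s,t)` at `s` and at `t`, then
`P(A) + P(B) = P(A ∪ B) + 2 · dist s t`. -/
theorem stmt_8 (s t n : EuclideanSpace ℝ (Fin 2)) (hst : s ≠ t) (hn : n ≠ 0)
    (hperp : ⟪t - s, n⟫_ℝ = 0)
    (A B : Set (EuclideanSpace ℝ (Fin 2)))
    (hAc : IsCompact A) (hAne : A.Nonempty) (hBc : IsCompact B) (hBne : B.Nonempty)
    (hsA : s ∈ A) (htA : t ∈ A) (hsB : s ∈ B) (htB : t ∈ B)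
    (hAside : ∀ x ∈ A, 0 ≤ ⟪x - s, n⟫_ℝ)
    (hBside : ∀ x ∈ B, ⟪x - s, n⟫_ℝ ≤ 0)
    (hslab : ∀ x ∈ A ∪ B, 0 ≤ ⟪x - s, t - s⟫_ℝ ∧ ⟪x - s, t - s⟫_ℝ ≤ ‖t - s‖ ^ 2) :
    P A + P B = P (A ∪ B) + 2 * dist s t := by
  -- nondegeneracy in coordinates
  have hv : 0 < (t 0 - s 0)^2 + (t 1 - s 1)^2 := by
    by_contra h
    push_neg at h
    have h0 : (t 0 - s 0)^2 = 0 :=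
      le_antisymm (by nlinarith [sq_nonneg (t 1 - s 1)]) (sq_nonneg _)
    have h1 : (t 1 - s 1)^2 = 0 :=
      le_antisymm (by nlinarith [sq_nonneg (t 0 - s 0)]) (sq_nonneg _)
    have h0' := sq_eq_zero_iff.1 h0
    have h1' := sq_eq_zero_iff.1 h1
    apply hst
    ext i
    fin_cases i
    · show s 0 = t 0; linarith
    · show s 1 = t 1; linarith
  have hnormsq : ‖t - s‖^2 = (t 0 - s 0)^2 + (t 1 - s 1)^2 := by
    rw [EuclideanSpace.norm_eq, Fin.sum_univ_two,
      Real.sq_sqrt (by positivity)]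
    simp [PiLp.sub_apply, Real.norm_eq_abs, sq_abs]
  have hperp' : (t 0 - s 0) * n 0 + (t 1 - s 1) * n 1 = 0 := by
    have h := hperp
    rw [inner_apply'] at h
    simp only [PiLp.sub_apply] at h
    linarith
  set c : ℝ := (n 1 * (t 0 - s 0) - n 0 * (t 1 - s 1)) / ((t 0 - s 0)^2 + (t 1 - s 1)^2)
    with hcdef
  have hn0 : n 0 = -c * (t 1 - s 1) := by
    rw [hcdef]
    field_simp
    linear_combination (t 0 - s 0) * hperp'
  have hn1 : n 1 = c * (t 0 - s 0) := by
    rw [hcdef]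
    field_simp
    linear_combination (t 1 - s 1) * hperp'
  have hcne : c ≠ 0 := by
    intro h
    apply hn
    have h0 : n 0 = 0 := by rw [hn0, h]; ring
    have h1 : n 1 = 0 := by rw [hn1, h]; ring
    ext i
    fin_cases i
    · show n 0 = 0; exact h0
    · show n 1 = 0; exact h1
  -- side conditions in coordinates
  have hAe : ∀ x ∈ A, 0 ≤ c * ((x 1 - s 1) * (t 0 - s 0) - (x 0 - s 0) * (t 1 - s 1)) := by
    intro x hx
    have h := hAside x hx
    rw [inner_apply'] at h
    simp only [PiLp.sub_apply] at h
    rw [hn0, hn1] at h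
    nlinarith [h]
  have hBe : ∀ x ∈ B, c * ((x 1 - s 1) * (t 0 - s 0) - (x 0 - s 0) * (t 1 - s 1)) ≤ 0 := by
    intro x hx
    have h := hBside x hx
    rw [inner_apply'] at h
    simp only [PiLp.sub_apply] at h
    rw [hn0, hn1] at h
    nlinarith [h]
  have hslab' : ∀ x ∈ A ∪ B,
      0 ≤ (x 0 - s 0) * (t 0 - s 0) + (x 1 - s 1) * (t 1 - s 1) ∧
      (x 0 - s 0) * (t 0 - s 0) + (x 1 - s 1) * (t 1 - s 1)
        ≤ (t 0 - s 0)^2 + (t 1 - s 1)^2 := by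
    intro x hx
    have h := hslab x hx
    rw [inner_apply', hnormsq] at h
    simp only [PiLp.sub_apply] at h
    exact ⟨h.1, h.2⟩
  -- the segment support function bounds from below
  have hminA : ∀ θ, max (⟪s, u θ⟫_ℝ) (⟪t, u θ⟫_ℝ) ≤ hsup A θ := fun θ =>
    max_le (le_hsup hAc hsA θ) (le_hsup hAc htA θ)
  have hminB : ∀ θ, max (⟪s, u θ⟫_ℝ) (⟪t, u θ⟫_ℝ) ≤ hsup B θ := fun θ =>
    max_le (le_hsup hBc hsB θ) (le_hsup hBc htB θ)
  -- the key pointwise identity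
  have hkey : ∀ θ, min (hsup A θ) (hsup B θ) = max (⟪s, u θ⟫_ℝ) (⟪t, u θ⟫_ℝ) := by
    intro θ
    refine le_antisymm ?_ (le_min (hminA θ) (hminB θ))
    have hq : ∀ (X : Set (EuclideanSpace ℝ (Fin 2))), X.Nonempty → X ⊆ A ∪ B →
        (∀ x ∈ X, ((x 1 - s 1) * (t 0 - s 0) - (x 0 - s 0) * (t 1 - s 1)) *
          (Real.sin θ * (t 0 - s 0) - Real.cos θ * (t 1 - s 1)) ≤ 0) →
        hsup X θ ≤ max (⟪s, u θ⟫_ℝ) (⟪t, u θ⟫_ℝ) := by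
      intro X hXne hXsub hX3
      apply hsup_le hXne
      intro x hx
      rw [inner_u, inner_u, inner_u]
      exact pt_bound (s 0) (s 1) (t 0) (t 1) (x 0) (x 1) (Real.cos θ) (Real.sin θ)
        hv (hslab' x (hXsub hx)).1 (hslab' x (hXsub hx)).2 (hX3 x hx)
    rcases le_total (c * (Real.sin θ * (t 0 - s 0) - Real.cos θ * (t 1 - s 1))) 0 with h | h
    · refine min_le_of_left_le (hq A hAne subset_union_left ?_)
      intro x hx
      have h1 := hAe x hx
      nlinarith [mul_nonneg h1 (neg_nonneg.2 h), mul_self_pos.2 hcne]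
    · refine min_le_of_right_le (hq B hBne subset_union_right ?_)
      intro x hx
      have h1 := hBe x hx
      nlinarith [mul_nonneg (neg_nonneg.2 (hBe x hx)) h, mul_self_pos.2 hcne]
  have hUc : IsCompact (A ∪ B) := hAc.union hBc
  have hUne : (A ∪ B).Nonempty := hAne.mono subset_union_left
  have hpt : ∀ θ, hsup A θ + hsup B θ
      = hsup (A ∪ B) θ + max (⟪s, u θ⟫_ℝ) (⟪t, u θ⟫_ℝ) := by
    intro θ
    have hmm := min_add_max (hsup A θ) (hsup B θ)
    rw [hkey θ] at hmm
    rw [hsup_union hAc hAne hBc hBne θ]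
    linarith
  -- integrability
  have iA : IntervalIntegrable (hsup A) volume 0 (2*π) :=
    (hsup_cont hAc hAne).intervalIntegrable _ _
  have iB : IntervalIntegrable (hsup B) volume 0 (2*π) :=
    (hsup_cont hBc hBne).intervalIntegrable _ _
  have iU : IntervalIntegrable (hsup (A ∪ B)) volume 0 (2*π) :=
    (hsup_cont hUc hUne).intervalIntegrable _ _
  have hm_eq : (fun θ => max (⟪s, u θ⟫_ℝ) (⟪t, u θ⟫_ℝ))
      = fun θ => max (s 0 * Real.cos θ + s 1 * Real.sin θ)
          (t 0 * Real.cos θ + t 1 * Real.sin θ) := by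
    funext θ
    rw [inner_u, inner_u]
  have iM : IntervalIntegrable (fun θ => max (⟪s, u θ⟫_ℝ) (⟪t, u θ⟫_ℝ)) volume 0 (2*π) := by
    rw [hm_eq]
    exact (Continuous.max (by fun_prop) (by fun_prop)).intervalIntegrable _ _
  -- the integral of the segment support function
  have hMint : ∫ θ in (0:ℝ)..(2*π), max (⟪s, u θ⟫_ℝ) (⟪t, u θ⟫_ℝ) = 2 * dist s t := by
    rw [hm_eq, integral_max_aux (s 0) (s 1) (t 0) (t 1) hv, dist_eq_norm']
    rw [EuclideanSpace.norm_eq, Fin.sum_univ_two]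
    congr 1
    simp [PiLp.sub_apply, Real.norm_eq_abs, sq_abs]
  -- assemble
  have PA : P A = ∫ θ in (0:ℝ)..(2*π), hsup A θ := rfl
  have PB : P B = ∫ θ in (0:ℝ)..(2*π), hsup B θ := rfl
  have PU : P (A ∪ B) = ∫ θ in (0:ℝ)..(2*π), hsup (A ∪ B) θ := rfl
  calc P A + P B = (∫ θ in (0:ℝ)..(2*π), hsup A θ) + ∫ θ in (0:ℝ)..(2*π), hsup B θ := by
        rw [PA, PB]
    _ = ∫ θ in (0:ℝ)..(2*π), (hsup A θ + hsup B θ) := (intervalIntegral.integral_add iA iB).symm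
    _ = ∫ θ in (0:ℝ)..(2*π), (hsup (A ∪ B) θ + max (⟪s, u θ⟫_ℝ) (⟪t, u θ⟫_ℝ)) := by
        apply integral_congr
        intro θ _
        exact hpt θ
    _ = (∫ θ in (0:ℝ)..(2*π), hsup (A ∪ B) θ)
        + ∫ θ in (0:ℝ)..(2*π), max (⟪s, u θ⟫_ℝ) (⟪t, u θ⟫_ℝ) :=
        intervalIntegral.integral_add iU iM
    _ = P (A ∪ B) + 2 * dist s t := by rw [PU, hMint]
end

section
/- Let K ⊆ ℝ² be a nonempty compact convex set, let s, t ∈ frontier K, and let Γ ⊆ ℝ² (the protected part) satisfy s ∉ Γ and t ∉ Γ. Then for every (θ,ρ): there exists a connected set S ⊆ frontier K with s ∈ S, t ∈ S and (S \ Γ) ∩ R(θ,ρ) = ∅ if and only if there exists a connected set S ⊆ frontier K with s ∈ S, t ∈ S and S ∩ R(θ,ρ) = ∅. (Theorem 4(2) of the paper for a convex two-route network without inner parts: a partial protect arrangement whose protected part Γ contains neither s nor t does not improve the probability of connecting s and t over the weakest arrangement — the disconnection events coincide.) -/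
open MeasureTheory Real Set
open scoped InnerProductSpace

/-- The perpendicular direction. -/
noncomputable def wv (θ : ℝ) : EuclideanSpace ℝ (Fin 2) := !₂[-(Real.sin θ), Real.cos θ]

noncomputable section Aux

variable {E : Type*} [NormedAddCommGroup E] [InnerProductSpace ℝ E]

/-- coordinate functional -/
def fc (v : E) (x : E) : ℝ := ⟪x, v⟫_ℝ

/-- point with coordinates `(q, y)` in the frame `(w, u)` -/
def ptv (u w : E) (q y : ℝ) : E := q • w + y • u

/-- lower envelope -/
def lo (u w : E) (K : Set E) (q : ℝ) : ℝ := sInf (fc u '' (K ∩ {x | fc w x = q}))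

/-- upper envelope -/
def hi (u w : E) (K : Set E) (q : ℝ) : ℝ := sSup (fc u '' (K ∩ {x | fc w x = q}))

/-- left end -/
def lef (w : E) (K : Set E) : ℝ := sInf (fc w '' K)

/-- right end -/
def rig (w : E) (K : Set E) : ℝ := sSup (fc w '' K)

lemma fc_cont (v : E) : Continuous (fc v) := continuous_id.inner continuous_const

lemma fc_add (v a b : E) : fc v (a + b) = fc v a + fc v b := inner_add_left a b v

lemma fc_smul (v : E) (r : ℝ) (a : E) : fc v (r • a) = r * fc v a := real_inner_smul_left a v r

lemma fc_neg_right (v x : E) : fc (-v) x = -(fc v x) := inner_neg_right x v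

lemma fc_image_neg (v : E) (S : Set E) : fc (-v) '' S = -(fc v '' S) := by
  ext r
  simp only [Set.mem_neg, Set.mem_image]
  constructor
  · rintro ⟨x, hx, rfl⟩; exact ⟨x, hx, by rw [fc_neg_right]; ring⟩
  · rintro ⟨x, hx, hxr⟩; exact ⟨x, hx, by rw [fc_neg_right, hxr]; ring⟩

lemma lo_negU (u w : E) (K : Set E) (q : ℝ) : lo (-u) w K q = -(hi u w K q) := by
  rw [lo, hi, fc_image_neg, Real.sInf_def, neg_neg]

lemma fc_sub (v a b : E) : fc v (a - b) = fc v a - fc v b := inner_sub_left a b v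

lemma ptv_negU (u w : E) (q y : ℝ) : ptv (-u) w q y = ptv u w q (-y) := by
  simp [ptv, smul_neg, neg_smul]

lemma ptv_negW (u w : E) (q y : ℝ) : ptv u (-w) q y = ptv u w (-q) y := by
  simp [ptv, smul_neg, neg_smul]

lemma lo_negW (u w : E) (K : Set E) (q : ℝ) : lo u (-w) K q = lo u w K (-q) := by
  have : {x : E | fc (-w) x = q} = {x : E | fc w x = -q} := by
    ext x; simp [fc_neg_right, neg_eq_iff_eq_neg]
  rw [lo, this, lo]

lemma hi_negW (u w : E) (K : Set E) (q : ℝ) : hi u (-w) K q = hi u w K (-q) := by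
  have : {x : E | fc (-w) x = q} = {x : E | fc w x = -q} := by
    ext x; simp [fc_neg_right, neg_eq_iff_eq_neg]
  rw [hi, this, hi]

lemma lef_negW (w : E) (K : Set E) : lef (-w) K = -(rig w K) := by
  rw [lef, rig, fc_image_neg, Real.sInf_def, neg_neg]

lemma rig_negW (w : E) (K : Set E) : rig (-w) K = -(lef w K) := by
  rw [rig, lef, fc_image_neg, Real.sInf_def, neg_neg]

/-- The bundle of hypotheses: an orthonormal planar frame `(w, u)` and a
nonempty compact convex set `K`. -/
structure Frame (u w : E) (K : Set E) : Prop where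
  hu : ⟪u, u⟫_ℝ = 1
  hw : ⟪w, w⟫_ℝ = 1
  hwu : ⟪w, u⟫_ℝ = 0
  hspan : ∀ x : E, ⟪x, w⟫_ℝ • w + ⟪x, u⟫_ℝ • u = x
  hKc : IsCompact K
  hKconv : Convex ℝ K
  hKne : K.Nonempty

namespace Frame

variable {u w : E} {K : Set E} (h : Frame u w K)

lemma negW (h : Frame u w K) : Frame u (-w) K := by
  refine ⟨h.hu, ?_, ?_, ?_, h.hKc, h.hKconv, h.hKne⟩
  · rw [inner_neg_neg]; exact h.hw
  · rw [inner_neg_left, h.hwu, neg_zero]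
  · intro x
    have := h.hspan x
    rw [inner_neg_right, neg_smul, smul_neg, neg_neg]
    exact this

lemma negU (h : Frame u w K) : Frame (-u) w K := by
  refine ⟨?_, h.hw, ?_, ?_, h.hKc, h.hKconv, h.hKne⟩
  · rw [inner_neg_neg]; exact h.hu
  · rw [inner_neg_right, h.hwu, neg_zero]
  · intro x
    have := h.hspan x
    rw [inner_neg_right, neg_smul, smul_neg, neg_neg]
    exact this

lemma norm_u (h : Frame u w K) : ‖u‖ = 1 := by
  have := h.hu
  rw [real_inner_self_eq_norm_mul_norm] at this
  nlinarith [norm_nonneg u]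

lemma norm_w (h : Frame u w K) : ‖w‖ = 1 := by
  have := h.hw
  rw [real_inner_self_eq_norm_mul_norm] at this
  nlinarith [norm_nonneg w]

lemma lip_u (h : Frame u w K) (x y : E) : |fc u x - fc u y| ≤ ‖x - y‖ := by
  rw [← fc_sub]
  calc |fc u (x - y)| ≤ ‖x - y‖ * ‖u‖ := abs_real_inner_le_norm _ _
  _ = ‖x - y‖ := by rw [h.norm_u, mul_one]

lemma lip_w (h : Frame u w K) (x y : E) : |fc w x - fc w y| ≤ ‖x - y‖ := by
  rw [← fc_sub]
  calc |fc w (x - y)| ≤ ‖x - y‖ * ‖w‖ := abs_real_inner_le_norm _ _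
  _ = ‖x - y‖ := by rw [h.norm_w, mul_one]

lemma fc_u_ptv (h : Frame u w K) (q y : ℝ) : fc u (ptv u w q y) = y := by
  rw [ptv, fc_add, fc_smul, fc_smul, fc, fc, h.hwu, h.hu]; ring

lemma fc_w_ptv (h : Frame u w K) (q y : ℝ) : fc w (ptv u w q y) = q := by
  rw [ptv, fc_add, fc_smul, fc_smul, fc, fc, h.hw, real_inner_comm w u, h.hwu]; ring

lemma ptv_self (h : Frame u w K) (x : E) : ptv u w (fc w x) (fc u x) = x := h.hspan x

lemma ptv_affine (q₁ q₂ y₁ y₂ a b : ℝ) (hab : a + b = 1) :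
    a • ptv u w q₁ y₁ + b • ptv u w q₂ y₂ = ptv u w (a * q₁ + b * q₂) (a * y₁ + b * y₂) := by
  simp only [ptv, smul_add, smul_smul]
  module

lemma image_w (h : Frame u w K) : fc w '' K = Icc (lef w K) (rig w K) :=
  eq_Icc_of_connected_compact ⟨h.hKne.image _, (h.hKconv.isPreconnected).image _
    (fc_cont w).continuousOn⟩ (h.hKc.image (fc_cont w))

lemma lef_le_rig (h : Frame u w K) : lef w K ≤ rig w K := by
  have := h.image_w
  rcases h.hKne with ⟨x, hx⟩
  have : fc w x ∈ Icc (lef w K) (rig w K) := this ▸ ⟨x, hx, rfl⟩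
  exact this.1.trans this.2

lemma slice_compact (q : ℝ) (h : Frame u w K) : IsCompact (K ∩ {x | fc w x = q}) :=
  h.hKc.inter_right (isClosed_eq (fc_cont w) continuous_const)

lemma slice_convex (q : ℝ) (h : Frame u w K) : Convex ℝ (K ∩ {x | fc w x = q}) := by
  refine h.hKconv.inter ?_
  intro x hx y hy a b ha hb hab
  simp only [mem_setOf_eq] at *
  rw [fc_add, fc_smul, fc_smul, hx, hy]
  linear_combination q * hab

lemma slice_nonempty (h : Frame u w K) {q : ℝ} (hq : q ∈ Icc (lef w K) (rig w K)) :
    (K ∩ {x | fc w x = q}).Nonempty := by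
  rw [← h.image_w] at hq
  rcases hq with ⟨x, hx, hfx⟩
  exact ⟨x, hx, hfx⟩

lemma image_u_slice (h : Frame u w K) {q : ℝ} (hq : q ∈ Icc (lef w K) (rig w K)) :
    fc u '' (K ∩ {x | fc w x = q}) = Icc (lo u w K q) (hi u w K q) :=
  eq_Icc_of_connected_compact
    ⟨(h.slice_nonempty hq).image _,
      ((h.slice_convex q).isPreconnected).image _ (fc_cont u).continuousOn⟩
    ((h.slice_compact q).image (fc_cont u))

lemma lo_le_hi (h : Frame u w K) {q : ℝ} (hq : q ∈ Icc (lef w K) (rig w K)) :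
    lo u w K q ≤ hi u w K q := by
  have := h.image_u_slice hq
  rcases (h.slice_nonempty hq).image (fc u) with ⟨y, hy⟩
  have : y ∈ Icc (lo u w K q) (hi u w K q) := this ▸ hy
  exact this.1.trans this.2

lemma mem_K_ptv (h : Frame u w K) {q y : ℝ} (hq : q ∈ Icc (lef w K) (rig w K))
    (hy : y ∈ Icc (lo u w K q) (hi u w K q)) : ptv u w q y ∈ K := by
  rw [← h.image_u_slice hq] at hy
  rcases hy with ⟨x, ⟨hxK, hxw⟩, hxu⟩
  have := h.ptv_self x
  rw [hxw, hxu] at this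
  rw [this]; exact hxK

lemma mem_Icc_w (h : Frame u w K) {x : E} (hx : x ∈ K) :
    fc w x ∈ Icc (lef w K) (rig w K) := h.image_w ▸ ⟨x, hx, rfl⟩

lemma lo_le (h : Frame u w K) {x : E} (hx : x ∈ K) : lo u w K (fc w x) ≤ fc u x ∧
    fc u x ≤ hi u w K (fc w x) := by
  have hq := h.mem_Icc_w hx
  have : fc u x ∈ Icc (lo u w K (fc w x)) (hi u w K (fc w x)) :=
    h.image_u_slice hq ▸ ⟨x, ⟨hx, rfl⟩, rfl⟩
  exact ⟨this.1, this.2⟩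

lemma lo_convexOn (h : Frame u w K) : ConvexOn ℝ (Icc (lef w K) (rig w K)) (lo u w K) := by
  refine ⟨convex_Icc _ _, ?_⟩
  intro q₁ hq₁ q₂ hq₂ a b ha hb hab
  have x₁ := h.mem_K_ptv hq₁ ⟨le_refl _, h.lo_le_hi hq₁⟩
  have x₂ := h.mem_K_ptv hq₂ ⟨le_refl _, h.lo_le_hi hq₂⟩
  have hcomb : a • ptv u w q₁ (lo u w K q₁) + b • ptv u w q₂ (lo u w K q₂) ∈ K :=
    h.hKconv x₁ x₂ ha hb hab
  rw [ptv_affine _ _ _ _ _ _ hab] at hcomb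
  have := (h.lo_le hcomb).1
  rw [h.fc_u_ptv, h.fc_w_ptv] at this
  simpa [smul_eq_mul] using this

lemma hi_eq_neg (u w : E) (K : Set E) : hi u w K = fun q => -(lo (-u) w K q) := by
  funext q; rw [lo_negU, neg_neg]

lemma hi_concaveOn (h : Frame u w K) : ConcaveOn ℝ (Icc (lef w K) (rig w K)) (hi u w K) := by
  rw [hi_eq_neg]
  exact (h.negU.lo_convexOn).neg

lemma lo_mem_frontier (h : Frame u w K) {q : ℝ} (hq : q ∈ Icc (lef w K) (rig w K)) :
    ptv u w q (lo u w K q) ∈ frontier K := by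
  refine ⟨subset_closure (h.mem_K_ptv hq ⟨le_refl _, h.lo_le_hi hq⟩), ?_⟩
  intro hint
  rcases Metric.isOpen_iff.1 isOpen_interior _ hint with ⟨δ, hδ, hball⟩
  have hmem : ptv u w q (lo u w K q) - (δ/2) • u ∈ K := by
    apply interior_subset
    apply hball
    rw [Metric.mem_ball, dist_eq_norm]
    simp only [sub_sub_cancel_left, norm_neg, norm_smul, h.norm_u]
    rw [Real.norm_eq_abs, abs_of_pos (by linarith), mul_one]
    linarith
  have h1 : ptv u w q (lo u w K q) - (δ/2) • u = ptv u w q (lo u w K q - δ/2) := by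
    simp only [ptv, sub_smul]; abel
  rw [h1] at hmem
  have := (h.lo_le hmem).1
  rw [h.fc_u_ptv, h.fc_w_ptv] at this
  linarith

lemma side_frontier (h : Frame u w K) {x : E} (hx : x ∈ K) (hgx : fc w x = rig w K) :
    x ∈ frontier K := by
  refine ⟨subset_closure hx, ?_⟩
  intro hint
  rcases Metric.isOpen_iff.1 isOpen_interior _ hint with ⟨δ, hδ, hball⟩
  have hmem : x + (δ/2) • w ∈ K := by
    apply interior_subset
    apply hball
    rw [Metric.mem_ball, dist_eq_norm]
    simp only [add_sub_cancel_left, norm_smul, h.norm_w]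
    rw [Real.norm_eq_abs, abs_of_pos (by linarith), mul_one]
    linarith
  have := (h.mem_Icc_w hmem).2
  rw [fc_add, fc_smul, hgx, fc, h.hw] at this
  linarith

lemma bot_frontier (h : Frame u w K) {x : E} (hx : x ∈ K)
    (hfx : fc u x = sInf (fc u '' K)) : x ∈ frontier K := by
  refine ⟨subset_closure hx, ?_⟩
  intro hint
  rcases Metric.isOpen_iff.1 isOpen_interior _ hint with ⟨δ, hδ, hball⟩
  have hmem : x - (δ/2) • u ∈ K := by
    apply interior_subset
    apply hball
    rw [Metric.mem_ball, dist_eq_norm]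
    simp only [sub_sub_cancel_left, norm_neg, norm_smul, h.norm_u]
    rw [Real.norm_eq_abs, abs_of_pos (by linarith), mul_one]
    linarith
  have hle : sInf (fc u '' K) ≤ fc u (x - (δ/2) • u) :=
    csInf_le ((h.hKc.image (fc_cont u)).bddBelow) ⟨_, hmem, rfl⟩
  rw [fc_sub, fc_smul] at hle
  have hu1 : fc u u = 1 := h.hu
  rw [hu1, hfx] at hle
  linarith




lemma lo_usc_right (h : Frame u w K) {q₀ : ℝ} (hq₀ : q₀ ∈ Icc (lef w K) (rig w K))
    {ε : ℝ} (hε : 0 < ε) :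
    ∃ δ > 0, ∀ q ∈ Icc (lef w K) (rig w K), q₀ ≤ q → q - q₀ < δ →
      lo u w K q < lo u w K q₀ + ε := by
  rcases eq_or_lt_of_le hq₀.2 with hqr | hqr
  · exact ⟨1, one_pos, fun q hq hq1 _ => by
      have : q = q₀ := le_antisymm (hqr ▸ hq.2) hq1
      rw [this]; linarith⟩
  · set M : ℝ := |lo u w K (rig w K) - lo u w K q₀| + 1 with hM
    have hM0 : 0 < M := by positivity
    refine ⟨ε * (rig w K - q₀) / M, div_pos (by nlinarith) hM0, fun q hq hq1 hq2 => ?_⟩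
    set t : ℝ := (q - q₀) / (rig w K - q₀) with ht
    have ht0 : 0 ≤ t := div_nonneg (by linarith) (by linarith)
    have ht1 : t ≤ 1 := by
      rw [div_le_one (by linarith)]; linarith [hq.2]
    have hrig : rig w K ∈ Icc (lef w K) (rig w K) := ⟨h.lef_le_rig, le_refl _⟩
    have hcx := h.lo_convexOn.2 hq₀ hrig (by linarith : (0:ℝ) ≤ 1 - t) ht0 (by ring)
    have hqe : (1 - t) • q₀ + t • rig w K = q := by
      show (1 - t) * q₀ + t * rig w K = q
      have hne : rig w K - q₀ ≠ 0 := by linarith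
      rw [ht]
      field_simp
      ring
    rw [hqe] at hcx
    have hcx2 : lo u w K q ≤ (1 - t) * lo u w K q₀ + t * lo u w K (rig w K) := hcx
    have h1 : lo u w K q ≤ lo u w K q₀ + t * (lo u w K (rig w K) - lo u w K q₀) := by
      nlinarith
    have h2 : t * (lo u w K (rig w K) - lo u w K q₀) ≤ t * M := by
      have : lo u w K (rig w K) - lo u w K q₀ ≤ M := by
        rw [hM]; nlinarith [le_abs_self (lo u w K (rig w K) - lo u w K q₀)]
      nlinarith
    have h3 : t * M < ε := by
      have htlt : t < ε / M := by
        rw [ht, div_lt_div_iff₀ (by linarith) hM0]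
        calc (q - q₀) * M < ε * (rig w K - q₀) / M * M := by nlinarith
        _ = ε * (rig w K - q₀) := by field_simp
      calc t * M < (ε / M) * M := by nlinarith
      _ = ε := by field_simp
    linarith

lemma lo_lsc (h : Frame u w K) {q₀ : ℝ} (hq₀ : q₀ ∈ Icc (lef w K) (rig w K))
    {ε : ℝ} (hε : 0 < ε) :
    ∃ δ > 0, ∀ q ∈ Icc (lef w K) (rig w K), |q - q₀| < δ →
      lo u w K q₀ - ε < lo u w K q := by
  set A : Set ℝ := fc w '' (K ∩ {x | fc u x ≤ lo u w K q₀ - ε}) with hA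
  have hAc : IsCompact A :=
    (h.hKc.inter_right (isClosed_le (fc_cont u) continuous_const)).image (fc_cont w)
  have hq₀A : q₀ ∉ A := by
    rintro ⟨x, ⟨hxK, hxf⟩, hxw⟩
    have := (h.lo_le hxK).1
    rw [hxw] at this
    simp only [mem_setOf_eq] at hxf
    linarith
  rcases Metric.isOpen_iff.1 hAc.isClosed.isOpen_compl q₀ hq₀A with ⟨δ, hδ, hball⟩
  refine ⟨δ, hδ, fun q hq hqd => ?_⟩
  by_contra hcon
  push_neg at hcon
  have hmem : ptv u w q (lo u w K q) ∈ K := h.mem_K_ptv hq ⟨le_refl _, h.lo_le_hi hq⟩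
  have : q ∈ A := ⟨ptv u w q (lo u w K q), ⟨hmem, by
      simp only [mem_setOf_eq]; rw [h.fc_u_ptv]; linarith⟩, h.fc_w_ptv _ _⟩
  exact hball (by rw [Metric.mem_ball, Real.dist_eq]; exact hqd) this

lemma lo_continuousOn (h : Frame u w K) :
    ContinuousOn (lo u w K) (Icc (lef w K) (rig w K)) := by
  intro q₀ hq₀
  rw [Metric.continuousWithinAt_iff]
  intro ε hε
  obtain ⟨δ₁, hδ₁, H1⟩ := h.lo_lsc hq₀ hε
  obtain ⟨δ₂, hδ₂, H2⟩ := h.lo_usc_right hq₀ hε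
  obtain ⟨δ₃, hδ₃, H3⟩ := h.negW.lo_usc_right (q₀ := -q₀)
    (by rw [lef_negW, rig_negW]; exact ⟨neg_le_neg hq₀.2, neg_le_neg hq₀.1⟩) hε
  refine ⟨min δ₁ (min δ₂ δ₃), by positivity, fun q hq hqd => ?_⟩
  rw [Real.dist_eq] at hqd
  rw [Real.dist_eq, abs_lt]
  constructor
  · have := H1 q hq (lt_of_lt_of_le hqd (min_le_left _ _))
    linarith
  · rcases le_total q₀ q with hle | hle
    · have := H2 q hq hle (by
        have : q - q₀ ≤ |q - q₀| := le_abs_self _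
        have h2 := lt_of_lt_of_le hqd (le_trans (min_le_right _ _) (min_le_left _ _))
        linarith)
      linarith
    · have hmem : -q ∈ Icc (lef (-w) K) (rig (-w) K) := by
        rw [lef_negW, rig_negW]; exact ⟨neg_le_neg hq.2, neg_le_neg hq.1⟩
      have := H3 (-q) hmem (by linarith) (by
        have : q₀ - q ≤ |q - q₀| := by rw [abs_sub_comm]; exact le_abs_self _
        have h2 := lt_of_lt_of_le hqd (le_trans (min_le_right _ _) (min_le_right _ _))
        linarith)
      rw [lo_negW, lo_negW, neg_neg, neg_neg] at this
      linarith

lemma hi_continuousOn (h : Frame u w K) :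
    ContinuousOn (hi u w K) (Icc (lef w K) (rig w K)) := by
  rw [hi_eq_neg]
  exact (h.negU.lo_continuousOn).neg

lemma onesided (h : Frame u w K) {q y : ℝ} (hq : q ∈ Icc (lef w K) (rig w K))
    (hqr : q < rig w K) (h3 : lo u w K q < y) (h4 : y < hi u w K q) :
    ∃ r > 0, ∀ q' y', q ≤ q' → |q' - q| < r → |y' - y| < r → ptv u w q' y' ∈ K := by
  have hβ : rig w K ∈ Icc (lef w K) (rig w K) := ⟨h.lef_le_rig, le_refl _⟩
  set β := rig w K with hbeta
  set y₂ := lo u w K β with hy2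
  have hb₂ : ptv u w β y₂ ∈ K := h.mem_K_ptv hβ ⟨le_refl _, h.lo_le_hi hβ⟩
  have hβq : 0 < β - q := by linarith
  set C : ℝ := 2 * (1 + |y - y₂| / (β - q)) with hC
  have hC0 : 0 < C := by positivity
  set r : ℝ := min ((β - q)/2) (min ((y - lo u w K q)/C) ((hi u w K q - y)/C)) with hr
  have hr0 : 0 < r := by
    refine lt_min (by positivity) (lt_min ?_ ?_)
    · apply div_pos (by linarith) hC0
    · apply div_pos (by linarith) hC0
  refine ⟨r, hr0, fun q' y' hqq' hd1 hd2 => ?_⟩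
  set t : ℝ := (q' - q)/(β - q) with ht
  have ht0 : 0 ≤ t := div_nonneg (by linarith) (le_of_lt hβq)
  have hq'q : q' - q < r := lt_of_abs_lt hd1
  have htr : t * (β - q) < r := by
    rw [ht]; field_simp
    linarith
  have ht2 : t ≤ 1/2 := by
    have hrb : r ≤ (β - q)/2 := min_le_left _ _
    rw [ht, div_le_div_iff₀ hβq (by norm_num : (0:ℝ) < 2)]
    nlinarith
  have h1t : (0:ℝ) < 1 - t := by linarith
  have h1t2 : (1:ℝ)/2 ≤ 1 - t := by linarith
  set y₀ : ℝ := (y' - t * y₂)/(1 - t) with hy0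
  have key : (1 - t) • ptv u w q y₀ + t • ptv u w β y₂ = ptv u w q' y' := by
    rw [ptv_affine _ _ _ _ _ _ (by ring)]
    congr 1
    · rw [ht]; field_simp; ring
    · rw [hy0]; field_simp; ring
  have hyd : y₀ - y = ((y' - y) + t * (y - y₂)) / (1 - t) := by
    rw [hy0]; field_simp; ring
  have hy₀ : |y₀ - y| < r * C := by
    rw [hyd, abs_div, abs_of_pos h1t, div_lt_iff₀ h1t]
    have e1 : |y' - y + t * (y - y₂)| ≤ |y' - y| + t * |y - y₂| := by
      calc |y' - y + t * (y - y₂)| ≤ |y' - y| + |t * (y - y₂)| := abs_add_le _ _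
      _ = |y' - y| + t * |y - y₂| := by rw [abs_mul, abs_of_nonneg ht0]
    have hta : t ≤ r / (β - q) := by
      rw [le_div_iff₀ hβq]; exact le_of_lt htr
    have e2 : t * |y - y₂| ≤ (r / (β - q)) * |y - y₂| :=
      mul_le_mul_of_nonneg_right hta (abs_nonneg _)
    have e3 : r + (r / (β - q)) * |y - y₂| = r * C * (1/2) := by
      rw [hC]; field_simp
    have e4 : r * C * (1/2) ≤ r * C * (1 - t) := by
      have : (0:ℝ) ≤ r * C := by positivity
      exact mul_le_mul_of_nonneg_left h1t2 this
    have e5 : |y' - y| < r := hd2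
    calc |y' - y + t * (y - y₂)| ≤ |y' - y| + t * |y - y₂| := e1
    _ < r + (r / (β - q)) * |y - y₂| := by linarith
    _ ≤ r * C * (1 - t) := by linarith
  have hrC1 : r * C ≤ y - lo u w K q := by
    have : r ≤ (y - lo u w K q)/C := le_trans (min_le_right _ _) (min_le_left _ _)
    rw [le_div_iff₀ hC0] at this; linarith
  have hrC2 : r * C ≤ hi u w K q - y := by
    have : r ≤ (hi u w K q - y)/C := le_trans (min_le_right _ _) (min_le_right _ _)
    rw [le_div_iff₀ hC0] at this; linarith
  have hy₀m : y₀ ∈ Icc (lo u w K q) (hi u w K q) := by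
    rw [abs_lt] at hy₀
    exact ⟨by linarith [hy₀.1], by linarith [hy₀.2]⟩
  have hcomb := h.hKconv (h.mem_K_ptv hq hy₀m) hb₂ (le_of_lt h1t) ht0 (by ring)
  rwa [key] at hcomb

lemma mem_interior_of_strict (h : Frame u w K) {a : E} (ha : a ∈ K)
    (h1 : lef w K < fc w a) (h2 : fc w a < rig w K)
    (h3 : lo u w K (fc w a) < fc u a) (h4 : fc u a < hi u w K (fc w a)) :
    a ∈ interior K := by
  obtain ⟨r₁, hr₁, H₁⟩ := h.onesided (h.mem_Icc_w ha) h2 h3 h4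
  have hq' : -(fc w a) ∈ Icc (lef (-w) K) (rig (-w) K) := by
    rw [lef_negW, rig_negW]
    exact ⟨neg_le_neg (h.mem_Icc_w ha).2, neg_le_neg (h.mem_Icc_w ha).1⟩
  have h2' : -(fc w a) < rig (-w) K := by rw [rig_negW]; linarith
  have h3' : lo u (-w) K (-(fc w a)) < fc u a := by rw [lo_negW, neg_neg]; exact h3
  have h4' : fc u a < hi u (-w) K (-(fc w a)) := by rw [hi_negW, neg_neg]; exact h4
  obtain ⟨r₂, hr₂, H₂⟩ := h.negW.onesided hq' h2' h3' h4'
  rw [mem_interior]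
  refine ⟨Metric.ball a (min r₁ r₂), ?_, Metric.isOpen_ball, Metric.mem_ball_self (lt_min hr₁ hr₂)⟩
  intro x hx
  rw [Metric.mem_ball, dist_eq_norm] at hx
  have hdw : |fc w x - fc w a| ≤ ‖x - a‖ := h.lip_w x a
  have hdu : |fc u x - fc u a| ≤ ‖x - a‖ := h.lip_u x a
  have hx_eq : ptv u w (fc w x) (fc u x) = x := h.ptv_self x
  have hxr1 : ‖x - a‖ < r₁ := lt_of_lt_of_le hx (min_le_left _ _)
  have hxr2 : ‖x - a‖ < r₂ := lt_of_lt_of_le hx (min_le_right _ _)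
  rcases le_total (fc w a) (fc w x) with hc | hc
  · have := H₁ (fc w x) (fc u x) hc (lt_of_le_of_lt hdw hxr1) (lt_of_le_of_lt hdu hxr1)
    rwa [hx_eq] at this
  · have habs : |(-(fc w x)) - (-(fc w a))| < r₂ := by
      rw [show (-(fc w x)) - (-(fc w a)) = -(fc w x - fc w a) by ring, abs_neg]
      exact lt_of_le_of_lt hdw hxr2
    have := H₂ (-(fc w x)) (fc u x) (neg_le_neg hc) habs (lt_of_le_of_lt hdu hxr2)
    rw [ptv_negW, neg_neg, hx_eq] at this
    exact this

lemma low_path (h : Frame u w K) {q₁ q₂ : ℝ} (h₁ : q₁ ∈ Icc (lef w K) (rig w K))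
    (h₂ : q₂ ∈ Icc (lef w K) (rig w K)) :
    ∃ L : Set E, IsPreconnected L ∧ ptv u w q₁ (lo u w K q₁) ∈ L ∧
      ptv u w q₂ (lo u w K q₂) ∈ L ∧ L ⊆ frontier K ∧
      ∀ x ∈ L, fc u x ≤ max (lo u w K q₁) (lo u w K q₂) := by
  have hsub : uIcc q₁ q₂ ⊆ Icc (lef w K) (rig w K) := uIcc_subset_Icc h₁ h₂
  refine ⟨(fun q => ptv u w q (lo u w K q)) '' uIcc q₁ q₂, ?_,
    ⟨q₁, left_mem_uIcc, rfl⟩, ⟨q₂, right_mem_uIcc, rfl⟩, ?_, ?_⟩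
  · apply IsPreconnected.image isPreconnected_uIcc
    show ContinuousOn (fun q => q • w + lo u w K q • u) (uIcc q₁ q₂)
    exact (continuousOn_id.smul continuousOn_const).add
      ((h.lo_continuousOn.mono hsub).smul continuousOn_const)
  · rintro x ⟨q, hqmem, rfl⟩
    exact h.lo_mem_frontier (hsub hqmem)
  · rintro x ⟨q, hqmem, rfl⟩
    rw [h.fc_u_ptv]
    exact h.lo_convexOn.le_max_of_mem_segment h₁ h₂ (by rwa [segment_eq_uIcc])

lemma side_path (h : Frame u w K) {y₁ : ℝ} (hy₁l : lo u w K (rig w K) ≤ y₁)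
    (hy₁h : y₁ ≤ hi u w K (rig w K)) :
    ∃ L : Set E, IsPreconnected L ∧ ptv u w (rig w K) y₁ ∈ L ∧
      ptv u w (rig w K) (lo u w K (rig w K)) ∈ L ∧ L ⊆ frontier K ∧ ∀ x ∈ L, fc u x ≤ y₁ := by
  have hrig : rig w K ∈ Icc (lef w K) (rig w K) := ⟨h.lef_le_rig, le_refl _⟩
  refine ⟨(fun y => ptv u w (rig w K) y) '' Icc (lo u w K (rig w K)) y₁, ?_,
    ⟨y₁, ⟨hy₁l, le_refl _⟩, rfl⟩, ⟨lo u w K (rig w K), ⟨le_refl _, hy₁l⟩, rfl⟩, ?_, ?_⟩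
  · apply IsPreconnected.image isPreconnected_Icc
    show ContinuousOn (fun y => rig w K • w + y • u) (Icc _ y₁)
    exact continuousOn_const.add (continuousOn_id.smul continuousOn_const)
  · rintro x ⟨y, hymem, rfl⟩
    refine h.side_frontier (h.mem_K_ptv hrig ⟨hymem.1, le_trans hymem.2 hy₁h⟩) (h.fc_w_ptv _ _)
  · rintro x ⟨y, hymem, rfl⟩
    rw [h.fc_u_ptv]
    exact hymem.2

lemma up_path (h : Frame u w K) {q₁ : ℝ} (h₁ : q₁ ∈ Icc (lef w K) (rig w K)) :
    ∃ L : Set E, IsPreconnected L ∧ ptv u w q₁ (hi u w K q₁) ∈ L ∧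
      ptv u w (rig w K) (hi u w K (rig w K)) ∈ L ∧ L ⊆ frontier K ∧
      ∀ x ∈ L, ∃ q ∈ Icc q₁ (rig w K), fc u x = hi u w K q := by
  have hsub : Icc q₁ (rig w K) ⊆ Icc (lef w K) (rig w K) := Icc_subset_Icc h₁.1 (le_refl _)
  refine ⟨(fun q => ptv u w q (hi u w K q)) '' Icc q₁ (rig w K), ?_,
    ⟨q₁, ⟨le_refl _, h₁.2⟩, rfl⟩, ⟨rig w K, ⟨h₁.2, le_refl _⟩, rfl⟩, ?_, ?_⟩
  · apply IsPreconnected.image isPreconnected_Icc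
    show ContinuousOn (fun q => q • w + hi u w K q • u) (Icc q₁ (rig w K))
    exact (continuousOn_id.smul continuousOn_const).add
      ((h.hi_continuousOn.mono hsub).smul continuousOn_const)
  · rintro x ⟨q, hqmem, rfl⟩
    have hfr := h.negU.lo_mem_frontier (hsub hqmem)
    rwa [lo_negU, ptv_negU, neg_neg] at hfr
  · rintro x ⟨q, hqmem, rfl⟩
    exact ⟨q, hqmem, h.fc_u_ptv _ _⟩

lemma exists_T_half (h : Frame u w K) {ρ : ℝ} {a : E} (ha : a ∈ frontier K) (haρ : fc u a < ρ)
    (hdir : fc u a = lo u w K (fc w a) ∨ fc w a = rig w K ∨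
      (fc u a = hi u w K (fc w a) ∧ ∀ q ∈ Icc (fc w a) (rig w K), hi u w K q ≤ fc u a)) :
    ∃ T : Set E, IsPreconnected T ∧ a ∈ T ∧ T ⊆ frontier K ∧ (∀ x ∈ T, fc u x < ρ) ∧
      ∃ x₀ ∈ T, fc u x₀ = sInf (fc u '' K) := by
  have haK : a ∈ K := h.hKc.isClosed.frontier_subset ha
  have hqa : fc w a ∈ Icc (lef w K) (rig w K) := h.mem_Icc_w haK
  have hrig : rig w K ∈ Icc (lef w K) (rig w K) := ⟨h.lef_le_rig, le_refl _⟩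
  obtain ⟨xm, hxmK, hfxm⟩ := (h.hKc.image (fc_cont u)).sInf_mem (h.hKne.image _)
  have hqm : fc w xm ∈ Icc (lef w K) (rig w K) := h.mem_Icc_w hxmK
  have hmle : ∀ x ∈ K, sInf (fc u '' K) ≤ fc u x := fun x hx =>
    csInf_le (h.hKc.image (fc_cont u)).bddBelow ⟨x, hx, rfl⟩
  have hlom : lo u w K (fc w xm) = sInf (fc u '' K) := by
    refine le_antisymm (hfxm ▸ (h.lo_le hxmK).1) ?_
    have hp : ptv u w (fc w xm) (lo u w K (fc w xm)) ∈ K :=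
      h.mem_K_ptv hqm ⟨le_refl _, h.lo_le_hi hqm⟩
    have := hmle _ hp
    rwa [h.fc_u_ptv] at this
  have hmρ : sInf (fc u '' K) < ρ := lt_of_le_of_lt (hmle a haK) haρ
  rcases hdir with h1 | h2 | ⟨h3a, h3b⟩
  · obtain ⟨L, hLp, hL1, hL2, hLf, hLb⟩ := h.low_path hqa hqm
    have haL : a ∈ L := by
      have : ptv u w (fc w a) (lo u w K (fc w a)) = a := by
        rw [← h1]; exact h.ptv_self a
      rwa [this] at hL1
    refine ⟨L, hLp, haL, hLf, fun x hx => ?_, ⟨_, hL2, by rw [h.fc_u_ptv, hlom]⟩⟩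
    have := hLb x hx
    rw [← h1, hlom] at this
    exact lt_of_le_of_lt this (max_lt haρ hmρ)
  · have hfa_lo : lo u w K (rig w K) ≤ fc u a := by
      have := (h.lo_le haK).1; rwa [h2] at this
    have hfa_hi : fc u a ≤ hi u w K (rig w K) := by
      have := (h.lo_le haK).2; rwa [h2] at this
    obtain ⟨L1, hp1, hm1a, hm1b, hf1, hb1⟩ := h.side_path hfa_lo hfa_hi
    obtain ⟨L2, hp2, hm2a, hm2b, hf2, hb2⟩ := h.low_path hrig hqm
    have haL : a ∈ L1 := by
      have : ptv u w (rig w K) (fc u a) = a := by rw [← h2]; exact h.ptv_self a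
      rwa [this] at hm1a
    refine ⟨L1 ∪ L2, IsPreconnected.union _ hm1b hm2a hp1 hp2, Or.inl haL,
      union_subset hf1 hf2, fun x hx => ?_, ⟨_, Or.inr hm2b, by rw [h.fc_u_ptv, hlom]⟩⟩
    rcases hx with hx | hx
    · exact lt_of_le_of_lt (hb1 x hx) haρ
    · have := hb2 x hx
      rw [hlom] at this
      exact lt_of_le_of_lt this (max_lt (lt_of_le_of_lt hfa_lo haρ) hmρ)
  · obtain ⟨L0, hp0, hm0a, hm0b, hf0, hb0⟩ := h.up_path hqa
    obtain ⟨L1, hp1, hm1a, hm1b, hf1, hb1⟩ :=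
      h.side_path (h.lo_le_hi hrig) (le_refl _)
    obtain ⟨L2, hp2, hm2a, hm2b, hf2, hb2⟩ := h.low_path hrig hqm
    have haL : a ∈ L0 := by
      have : ptv u w (fc w a) (fc u a) = a := h.ptv_self a
      rw [h3a] at this
      rwa [this] at hm0a
    have hhirig : hi u w K (rig w K) ≤ fc u a := h3b _ ⟨hqa.2, le_refl _⟩
    refine ⟨L0 ∪ (L1 ∪ L2), ?_, Or.inl haL,
      union_subset hf0 (union_subset hf1 hf2), fun x hx => ?_,
      ⟨_, Or.inr (Or.inr hm2b), by rw [h.fc_u_ptv, hlom]⟩⟩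
    · exact IsPreconnected.union _ hm0b (Or.inl hm1a) hp0
        (IsPreconnected.union _ hm1b hm2a hp1 hp2)
    · rcases hx with hx | hx | hx
      · obtain ⟨q, hqmem, hfq⟩ := hb0 x hx
        exact lt_of_le_of_lt (hfq ▸ h3b q hqmem) haρ
      · exact lt_of_le_of_lt (le_trans (hb1 x hx) hhirig) haρ
      · have := hb2 x hx
        rw [hlom] at this
        exact lt_of_le_of_lt this
          (max_lt (lt_of_le_of_lt (le_trans (h.lo_le_hi hrig) hhirig) haρ) hmρ)

lemma exists_T (h : Frame u w K) {ρ : ℝ} {a : E} (ha : a ∈ frontier K) (haρ : fc u a < ρ) :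
    ∃ T : Set E, IsPreconnected T ∧ a ∈ T ∧ T ⊆ frontier K ∧ (∀ x ∈ T, fc u x < ρ) ∧
      ∃ x₀ ∈ T, fc u x₀ = sInf (fc u '' K) := by
  have haK : a ∈ K := h.hKc.isClosed.frontier_subset ha
  have hqa := h.mem_Icc_w haK
  by_cases h1 : fc u a = lo u w K (fc w a)
  · exact h.exists_T_half ha haρ (Or.inl h1)
  by_cases h2 : fc w a = rig w K
  · exact h.exists_T_half ha haρ (Or.inr (Or.inl h2))
  by_cases h2' : fc w a = lef w K
  · exact h.negW.exists_T_half ha haρ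
      (Or.inr (Or.inl (by rw [rig_negW, fc_neg_right, h2'])))
  have hlef : lef w K < fc w a := lt_of_le_of_ne hqa.1 (fun hh => h2' hh.symm)
  have hrigs : fc w a < rig w K := lt_of_le_of_ne hqa.2 h2
  have hlo : lo u w K (fc w a) < fc u a := lt_of_le_of_ne (h.lo_le haK).1 (fun hh => h1 hh.symm)
  have hhi : fc u a = hi u w K (fc w a) := by
    by_contra hne
    have hlt : fc u a < hi u w K (fc w a) := lt_of_le_of_ne (h.lo_le haK).2 hne
    exact ha.2 (h.mem_interior_of_strict haK hlef hrigs hlo hlt)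
  by_cases hR : ∀ q ∈ Icc (fc w a) (rig w K), hi u w K q ≤ fc u a
  · exact h.exists_T_half ha haρ (Or.inr (Or.inr ⟨hhi, hR⟩))
  push_neg at hR
  obtain ⟨q', hq'mem, hq'⟩ := hR
  have hL : ∀ q ∈ Icc (lef w K) (fc w a), hi u w K q ≤ fc u a := by
    intro q hqmem
    by_contra hq''
    push_neg at hq''
    have hqs : q ∈ Icc (lef w K) (rig w K) := ⟨hqmem.1, le_trans hqmem.2 hqa.2⟩
    have hq's : q' ∈ Icc (lef w K) (rig w K) := ⟨le_trans hqa.1 hq'mem.1, hq'mem.2⟩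
    have hmid : fc w a ∈ Icc q q' := ⟨hqmem.2, hq'mem.1⟩
    have hmn := h.hi_concaveOn.min_le_of_mem_Icc hqs hq's hmid
    have hmin : fc u a < min (hi u w K q) (hi u w K q') := lt_min hq'' hq'
    rw [← hhi] at hmn
    linarith
  refine h.negW.exists_T_half ha haρ (Or.inr (Or.inr ⟨?_, ?_⟩))
  · rw [fc_neg_right, hi_negW, neg_neg]
    exact hhi
  · intro q hqmem
    rw [fc_neg_right, rig_negW] at hqmem
    rw [hi_negW]
    exact hL (-q) ⟨by linarith [hqmem.2], by linarith [hqmem.1]⟩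

lemma main (h : Frame u w K) {ρ : ℝ} {s t : E} (hs : s ∈ frontier K) (ht : t ∈ frontier K)
    (hfs : fc u s < ρ) (hft : fc u t < ρ) :
    ∃ S : Set E, S ⊆ frontier K ∧ IsConnected S ∧ s ∈ S ∧ t ∈ S ∧ ∀ x ∈ S, fc u x < ρ := by
  obtain ⟨T₁, hp1, ha1, hf1, hb1, x₁, hx₁, hfx₁⟩ := h.exists_T hs hfs
  obtain ⟨T₂, hp2, ha2, hf2, hb2, x₂, hx₂, hfx₂⟩ := h.exists_T ht hft
  have hmρ : sInf (fc u '' K) < ρ := by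
    have : sInf (fc u '' K) ≤ fc u s :=
      csInf_le (h.hKc.image (fc_cont u)).bddBelow ⟨s, h.hKc.isClosed.frontier_subset hs, rfl⟩
    linarith
  set B : Set E := K ∩ {x | fc u x = sInf (fc u '' K)} with hB
  have hBf : B ⊆ frontier K := fun x hx => h.bot_frontier hx.1 hx.2
  have hBconv : Convex ℝ B := by
    refine h.hKconv.inter ?_
    intro x hx y hy a b hya hyb hab
    simp only [mem_setOf_eq] at *
    rw [fc_add, fc_smul, fc_smul, hx, hy]
    linear_combination sInf (fc u '' K) * hab
  have hx₁B : x₁ ∈ B := ⟨h.hKc.isClosed.frontier_subset (hf1 hx₁), hfx₁⟩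
  have hx₂B : x₂ ∈ B := ⟨h.hKc.isClosed.frontier_subset (hf2 hx₂), hfx₂⟩
  refine ⟨T₁ ∪ (B ∪ T₂), ?_, ⟨⟨s, Or.inl ha1⟩, ?_⟩, Or.inl ha1, Or.inr (Or.inr ha2), ?_⟩
  · exact union_subset hf1 (union_subset hBf hf2)
  · exact IsPreconnected.union x₁ hx₁ (Or.inl hx₁B) hp1
      (IsPreconnected.union x₂ hx₂B hx₂ hBconv.isPreconnected hp2)
  · rintro x (hx | hx | hx)
    · exact hb1 x hx
    · rw [hx.2]; exact hmρ
    · exact hb2 x hx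

end Frame
end Aux

lemma frame_uw (θ : ℝ) {K : Set (EuclideanSpace ℝ (Fin 2))} (hKc : IsCompact K)
    (hKconv : Convex ℝ K) (hKne : K.Nonempty) : Frame (u θ) (wv θ) K := by
  refine ⟨?_, ?_, ?_, ?_, hKc, hKconv, hKne⟩
  · rw [PiLp.inner_apply]; simp [PiLp.inner_apply, Fin.sum_univ_two, RCLike.inner_apply, u]
  · rw [PiLp.inner_apply]; simp [PiLp.inner_apply, Fin.sum_univ_two, RCLike.inner_apply, wv]
  · simp [PiLp.inner_apply, Fin.sum_univ_two, RCLike.inner_apply, u, wv]; ring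
  · intro x
    ext i
    fin_cases i
    · simp [PiLp.inner_apply, Fin.sum_univ_two, RCLike.inner_apply, PiLp.add_apply,
        PiLp.smul_apply, u, wv]
      linear_combination (x 0) * (sin_sq_add_cos_sq θ)
    · simp [PiLp.inner_apply, Fin.sum_univ_two, RCLike.inner_apply, PiLp.add_apply,
        PiLp.smul_apply, u, wv]
      linear_combination (x 1) * (sin_sq_add_cos_sq θ)

/-- Theorem 4(2) of the paper for a convex two-route network without inner parts:
if the protected part `Γ` contains neither `s` nor `t`, then partial protection does not
change the disconnection events, hence does not improve the connection probability. -/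
theorem stmt_11 (K : Set (EuclideanSpace ℝ (Fin 2)))
    (hKc : IsCompact K) (hKconv : Convex ℝ K) (hKne : K.Nonempty)
    (s t : EuclideanSpace ℝ (Fin 2)) (hs : s ∈ frontier K) (ht : t ∈ frontier K)
    (Γ : Set (EuclideanSpace ℝ (Fin 2))) (hsΓ : s ∉ Γ) (htΓ : t ∉ Γ) (θ ρ : ℝ) :
    (∃ S : Set (EuclideanSpace ℝ (Fin 2)), S ⊆ frontier K ∧ IsConnected S ∧
        s ∈ S ∧ t ∈ S ∧ (S \ Γ) ∩ R θ ρ = ∅)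
      ↔ (∃ S : Set (EuclideanSpace ℝ (Fin 2)), S ⊆ frontier K ∧ IsConnected S ∧
        s ∈ S ∧ t ∈ S ∧ S ∩ R θ ρ = ∅) := by
  constructor
  · rintro ⟨S, hsub, hconn, hsS, htS, hdis⟩
    have hfs : fc (u θ) s < ρ := by
      by_contra hge
      push_neg at hge
      have hmem : s ∈ (S \ Γ) ∩ R θ ρ := ⟨⟨hsS, hsΓ⟩, hge⟩
      rw [hdis] at hmem
      exact hmem
    have hft : fc (u θ) t < ρ := by
      by_contra hge
      push_neg at hge
      have hmem : t ∈ (S \ Γ) ∩ R θ ρ := ⟨⟨htS, htΓ⟩, hge⟩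
      rw [hdis] at hmem
      exact hmem
    obtain ⟨S', h1, h2, h3, h4, h5⟩ := (frame_uw θ hKc hKconv hKne).main hs ht hfs hft
    refine ⟨S', h1, h2, h3, h4, ?_⟩
    apply eq_empty_iff_forall_notMem.2
    rintro x ⟨hxS, hxR⟩
    exact absurd hxR (not_le.2 (h5 x hxS))
  · rintro ⟨S, hsub, hconn, hsS, htS, hdis⟩
    refine ⟨S, hsub, hconn, hsS, htS, ?_⟩
    rw [← subset_empty_iff, ← hdis]
    exact inter_subset_inter_left _ diff_subset
end
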